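/- arXiv:2503.22157 — 3 statements merged into one kernel-verified Lean document; each statement's English description precedes it below -/
import Mathlib

section
/- Let (g, [-,-], P) be a Nijenhuis Lie algebra and M a representation of (g, [-,-]) with action (a, x) ↦ a·x, equipped with a linear map P_M : M → M. Then the semi-direct product bracket [(a,x),(b,y)] := ([a,b], a·y - b·x) together with the operator (a,x) ↦ (P a, P_M x) defines a Nijenhuis Lie algebra structure on g ⊕ M if and only if P(a)·P_M(x) = P_M(P(a)·x + a·P_M(x) - P_M(a·x)) for all a ∈ g and x ∈ M. -/
/-- The semi-direct product bracket on `g × M`: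
`[(a,x),(b,y)] = ([a,b], a·y - b·x)`. -/
def sdBracket {g : Type*} [LieRing g]
    {M : Type*} [AddCommGroup M] [LieRingModule g M]
    (p q : g × M) : g × M :=
  (⁅p.1, q.1⁆, ⁅p.1, q.2⁆ - ⁅q.1, p.2⁆)

/-- The operator `(a,x) ↦ (P a, P_M x)` on `g × M`. -/
def sdOp {k : Type*} [Field k] {g : Type*} [LieRing g] [LieAlgebra k g]
    {M : Type*} [AddCommGroup M] [Module k M]
    (P : g →ₗ[k] g) (PM : M →ₗ[k] M) (p : g × M) : g × M :=
  (P p.1, PM p.2)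

/-- For a Nijenhuis Lie algebra `(g, [-,-], P)` and a representation `M` of `g`
equipped with a linear map `P_M`, the semi-direct product bracket together with the operator
`(a,x) ↦ (P a, P_M x)` defines a Nijenhuis Lie algebra structure on `g ⊕ M` if and only if
`P(a)·P_M(x) = P_M(P(a)·x + a·P_M(x) - P_M(a·x))` for all `a ∈ g`, `x ∈ M`. -/
theorem semidirect_nijenhuis_iff {k : Type*} [Field k] [CharZero k]
    {g : Type*} [LieRing g] [LieAlgebra k g]
    {M : Type*} [AddCommGroup M] [Module k M] [LieRingModule g M] [LieModule k g M]
    (P : g →ₗ[k] g) (PM : M →ₗ[k] M)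
    (hP : ∀ a b : g, ⁅P a, P b⁆ = P (⁅P a, b⁆ + ⁅a, P b⁆ - P ⁅a, b⁆)) :
    ((∀ u v : g × M, sdBracket u v = - sdBracket v u) ∧
     (∀ u v w : g × M,
        sdBracket u (sdBracket v w) =
          sdBracket (sdBracket u v) w + sdBracket v (sdBracket u w)) ∧
     (∀ u v : g × M,
        sdBracket (sdOp P PM u) (sdOp P PM v) =
          sdOp P PM (sdBracket (sdOp P PM u) v + sdBracket u (sdOp P PM v)
            - sdOp P PM (sdBracket u v))))
    ↔ (∀ (a : g) (x : M), ⁅P a, PM x⁆ = PM (⁅P a, x⁆ + ⁅a, PM x⁆ - PM ⁅a, x⁆)) := by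
  constructor
  · rintro ⟨-, -, h3⟩ a x
    have := congrArg Prod.snd (h3 (a, 0) (0, x))
    simpa [sdBracket, sdOp, Prod.ext_iff] using this
  · intro hM
    refine ⟨?_, ?_, ?_⟩
    · intro u v
      refine Prod.ext ?_ ?_
      · show ⁅u.1, v.1⁆ = -⁅v.1, u.1⁆
        exact (lie_skew u.1 v.1).symm
      · show ⁅u.1, v.2⁆ - ⁅v.1, u.2⁆ = -(⁅v.1, u.2⁆ - ⁅u.1, v.2⁆)
        abel
    · intro u v w
      refine Prod.ext ?_ ?_
      · show ⁅u.1, ⁅v.1, w.1⁆⁆ = ⁅⁅u.1, v.1⁆, w.1⁆ + ⁅v.1, ⁅u.1, w.1⁆⁆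
        exact leibniz_lie u.1 v.1 w.1
      · show ⁅u.1, ⁅v.1, w.2⁆ - ⁅w.1, v.2⁆⁆ - ⁅⁅v.1, w.1⁆, u.2⁆ =
          (⁅⁅u.1, v.1⁆, w.2⁆ - ⁅w.1, ⁅u.1, v.2⁆ - ⁅v.1, u.2⁆⁆) +
          (⁅v.1, ⁅u.1, w.2⁆ - ⁅w.1, u.2⁆⁆ - ⁅⁅u.1, w.1⁆, v.2⁆)
        rw [lie_sub, lie_sub, lie_sub, leibniz_lie u.1 v.1 w.2,
          leibniz_lie u.1 w.1 v.2, leibniz_lie v.1 w.1 u.2]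
        abel
    · intro u v
      have h1 := hM u.1 v.2
      have h2 := hM v.1 u.2
      have h0 := hP u.1 v.1
      refine Prod.ext ?_ ?_
      · show ⁅P u.1, P v.1⁆ =
          P ((⁅P u.1, v.1⁆ + ⁅u.1, P v.1⁆) - P ⁅u.1, v.1⁆)
        exact h0
      · show ⁅P u.1, PM v.2⁆ - ⁅P v.1, PM u.2⁆ =
          PM (((⁅P u.1, v.2⁆ - ⁅v.1, PM u.2⁆) + (⁅u.1, PM v.2⁆ - ⁅P v.1, u.2⁆))
            - PM (⁅u.1, v.2⁆ - ⁅v.1, u.2⁆))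
        rw [h1, h2]
        simp only [map_add, map_sub]
        abel
end

section
/- Let (g, [-,-], P) be a Nijenhuis Lie algebra and (M, P_M) a Nijenhuis representation over it. Define a new action of g on M by a ▷ x := P(a)·x. Then (M, ▷, P_M) is a Nijenhuis representation over the deformed Nijenhuis Lie algebra (g, [-,-]_P, P); in particular ▷ is a Lie algebra action of (g, [-,-]_P) on M and P([a]) ▷ P_M(x) = P_M(P(a) ▷ x + a ▷ P_M(x) - P_M(a ▷ x)). -/
/-- The deformed bracket `[a,b]_P := [P a, b] + [a, P b] - P [a, b]`. -/
def njBracket {k : Type*} [Field k] {g : Type*} [LieRing g] [LieAlgebra k g]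
    (P : g →ₗ[k] g) (a b : g) : g :=
  ⁅P a, b⁆ + ⁅a, P b⁆ - P ⁅a, b⁆

/-- Let `(g, [-,-], P)` be a Nijenhuis Lie algebra and `(M, P_M)` a Nijenhuis
representation over it.  The new action `a ▷ x := P(a)·x` makes `(M, ▷, P_M)` into a
Nijenhuis representation over the deformed Nijenhuis Lie algebra `(g, [-,-]_P, P)`:
`▷` is a (bilinear) Lie algebra action of `(g, [-,-]_P)` on `M`, and
`P(a) ▷ P_M(x) = P_M(P(a) ▷ x + a ▷ P_M(x) - P_M(a ▷ x))`. -/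
theorem descendant_nijenhuis_representation {k : Type*} [Field k] [CharZero k]
    {g : Type*} [LieRing g] [LieAlgebra k g]
    {M : Type*} [AddCommGroup M] [Module k M] [LieRingModule g M] [LieModule k g M]
    (P : g →ₗ[k] g) (PM : M →ₗ[k] M)
    (hP : ∀ a b : g, ⁅P a, P b⁆ = P (⁅P a, b⁆ + ⁅a, P b⁆ - P ⁅a, b⁆))
    (hPM : ∀ (a : g) (x : M), ⁅P a, PM x⁆ = PM (⁅P a, x⁆ + ⁅a, PM x⁆ - PM ⁅a, x⁆)) :
    -- `a ▷ x := P(a)·x = ⁅P a, x⁆` is bilinear: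
    (∀ (a b : g) (x : M), ⁅P (a + b), x⁆ = ⁅P a, x⁆ + ⁅P b, x⁆) ∧
    (∀ (c : k) (a : g) (x : M), ⁅P (c • a), x⁆ = c • ⁅P a, x⁆) ∧
    (∀ (a : g) (x y : M), ⁅P a, x + y⁆ = ⁅P a, x⁆ + ⁅P a, y⁆) ∧
    (∀ (c : k) (a : g) (x : M), ⁅P a, c • x⁆ = c • ⁅P a, x⁆) ∧
    -- `▷` is a Lie algebra action of `(g, [-,-]_P)`:
    (∀ (a b : g) (x : M),
      ⁅P (njBracket P a b), x⁆ = ⁅P a, ⁅P b, x⁆⁆ - ⁅P b, ⁅P a, x⁆⁆) ∧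
    -- the Nijenhuis representation condition for `(M, ▷, P_M)` over `(g, [-,-]_P, P)`:
    (∀ (a : g) (x : M),
      ⁅P (P a), PM x⁆ = PM (⁅P (P a), x⁆ + ⁅P a, PM x⁆ - PM ⁅P a, x⁆)) := by
  refine ⟨fun a b x => by rw [map_add, add_lie],
    fun c a x => by rw [map_smul, smul_lie],
    fun a x y => lie_add _ _ _,
    fun c a x => lie_smul _ _ _,
    fun a b x => ?_,
    fun a x => hPM (P a) x⟩
  have : P (njBracket P a b) = ⁅P a, P b⁆ := (hP a b).symm
  rw [this, lie_lie]
end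

section
/- Let (A, [-,-], ρ) be a Lie algebroid (Lie–Rinehart algebra over R = C^∞(M)) and P a Nijenhuis operator on A, i.e. a C^∞(M)-linear map with vanishing Nijenhuis torsion. Then the bracket [X,Y]^P := [P X, Y] + [X, P Y] - P[X,Y] together with the anchor ρ ∘ P defines a new Lie algebroid structure on A: [-,-]^P is a Lie bracket and satisfies [X, fY]^P = f[X,Y]^P + (ρ(P X) f) Y. -/
/-- The deformed bracket `[X,Y]^P := [P X, Y] + [X, P Y] - P [X,Y]`. -/
def deformedBracket {R : Type*} [CommRing R] {L : Type*} [LieRing L] [Module R L]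
    (P : L →ₗ[R] L) (X Y : L) : L :=
  ⁅P X, Y⁆ + ⁅X, P Y⁆ - P ⁅X, Y⁆

lemma jac3 {L : Type*} [LieRing L] (a b c : L) :
    ⁅⁅a, b⁆, c⁆ + ⁅⁅b, c⁆, a⁆ + ⁅⁅c, a⁆, b⁆ = 0 := by
  have h1 : ⁅⁅b, c⁆, a⁆ = -⁅a, ⁅b, c⁆⁆ := by rw [← lie_skew]
  have h2 : ⁅⁅c, a⁆, b⁆ = -⁅b, ⁅c, a⁆⁆ := by rw [← lie_skew]
  rw [h1, h2, lie_lie, ← lie_skew c a, lie_neg]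
  abel

/-- Let `(A, [-,-], ρ)` be a Lie algebroid over `R = C^∞(M)` and `P` a Nijenhuis
operator on it (a `C^∞(M)`-linear map with vanishing Nijenhuis torsion).  Then the bracket
`[X,Y]^P := [P X, Y] + [X, P Y] - P[X,Y]` together with the anchor `ρ ∘ P` defines a new Lie
algebroid structure: `[-,-]^P` is a Lie bracket and `[X, fY]^P = f [X,Y]^P + (ρ(P X) f) Y`. -/
theorem deformed_lie_algebroid {R : Type*} [CommRing R]
    {L : Type*} [LieRing L] [Module R L]
    (ρ : L → R → R)
    -- Lie algebroid axioms:
    (hρ_addf : ∀ (X : L) (f g : R), ρ X (f + g) = ρ X f + ρ X g)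
    (hρ_deriv : ∀ (X : L) (f g : R), ρ X (f * g) = ρ X f * g + f * ρ X g)
    (hρ_addX : ∀ (X Y : L) (f : R), ρ (X + Y) f = ρ X f + ρ Y f)
    (hρ_smulX : ∀ (f : R) (X : L) (g : R), ρ (f • X) g = f * ρ X g)
    (hρ_lie : ∀ (X Y : L) (f : R), ρ ⁅X, Y⁆ f = ρ X (ρ Y f) - ρ Y (ρ X f))
    (hleib : ∀ (X Y : L) (f : R), ⁅X, f • Y⁆ = f • ⁅X, Y⁆ + ρ X f • Y)
    (P : L →ₗ[R] L)
    -- `P` is a Nijenhuis operator: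
    (hNij : ∀ X Y : L, ⁅P X, P Y⁆ = P ⁅P X, Y⁆ + P ⁅X, P Y⁆ - P (P ⁅X, Y⁆)) :
    -- biadditivity:
    (∀ X X' Y : L, deformedBracket P (X + X') Y
        = deformedBracket P X Y + deformedBracket P X' Y) ∧
    (∀ X Y Y' : L, deformedBracket P X (Y + Y')
        = deformedBracket P X Y + deformedBracket P X Y') ∧
    -- antisymmetry:
    (∀ X Y : L, deformedBracket P X Y = - deformedBracket P Y X) ∧
    -- Jacobi identity:
    (∀ X Y Z : L,
      deformedBracket P (deformedBracket P X Y) Z +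
        deformedBracket P (deformedBracket P Y Z) X +
        deformedBracket P (deformedBracket P Z X) Y = 0) ∧
    -- Leibniz rule for the new anchor `ρ ∘ P`:
    (∀ (X Y : L) (f : R),
      deformedBracket P X (f • Y) = f • deformedBracket P X Y + ρ (P X) f • Y) := by
  
  have hPD : ∀ X Y : L, P (deformedBracket P X Y) = ⁅P X, P Y⁆ := by
    intro X Y
    simp only [deformedBracket, map_sub, map_add, ← hNij]
  have triple : ∀ X Y Z : L, deformedBracket P (deformedBracket P X Y) Z =
      ⁅⁅P X, P Y⁆, Z⁆ + ⁅⁅P X, Y⁆, P Z⁆ + ⁅⁅X, P Y⁆, P Z⁆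
        - P ⁅⁅P X, Y⁆, Z⁆ - P ⁅⁅X, P Y⁆, Z⁆ - P ⁅⁅X, Y⁆, P Z⁆
        + P (P ⁅⁅X, Y⁆, Z⁆) := by
    intro X Y Z
    rw [show deformedBracket P (deformedBracket P X Y) Z =
        ⁅P (deformedBracket P X Y), Z⁆ + ⁅deformedBracket P X Y, P Z⁆
          - P ⁅deformedBracket P X Y, Z⁆ from rfl, hPD]
    simp only [deformedBracket, add_lie, sub_lie, lie_add, lie_sub, map_add, map_sub]
    rw [hNij ⁅X, Y⁆ Z]
    abel
  refine ⟨?_, ?_, ?_, ?_, ?_⟩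
  · intro X X' Y
    simp only [deformedBracket, add_lie, lie_add, map_add]
    abel
  · intro X Y Y'
    simp only [deformedBracket, add_lie, lie_add, map_add]
    abel
  · intro X Y
    simp only [deformedBracket]
    rw [← lie_skew Y X, ← lie_skew (P Y) X, ← lie_skew Y (P X)]
    simp only [map_neg]
    abel
  · intro X Y Z
    rw [triple X Y Z, triple Y Z X, triple Z X Y]
    have h1 := jac3 (P X) (P Y) Z
    have h2 := jac3 (P Y) (P Z) X
    have h3 := jac3 (P Z) (P X) Y
    have hq1 : P ⁅⁅P X, Y⁆, Z⁆ + P ⁅⁅Y, Z⁆, P X⁆ + P ⁅⁅Z, P X⁆, Y⁆ = 0 := by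
      rw [← map_add, ← map_add, jac3, map_zero]
    have hq2 : P ⁅⁅X, P Y⁆, Z⁆ + P ⁅⁅P Y, Z⁆, X⁆ + P ⁅⁅Z, X⁆, P Y⁆ = 0 := by
      rw [← map_add, ← map_add, jac3, map_zero]
    have hq3 : P ⁅⁅X, Y⁆, P Z⁆ + P ⁅⁅Y, P Z⁆, X⁆ + P ⁅⁅P Z, X⁆, Y⁆ = 0 := by
      rw [← map_add, ← map_add, jac3, map_zero]
    have hpp : P (P ⁅⁅X, Y⁆, Z⁆) + P (P ⁅⁅Y, Z⁆, X⁆) + P (P ⁅⁅Z, X⁆, Y⁆) = 0 := by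
      rw [← map_add, ← map_add, ← map_add, ← map_add, jac3, map_zero, map_zero]
    linear_combination (norm := abel) h1 + h2 + h3 - hq1 - hq2 - hq3 + hpp
  · intro X Y f
    simp only [deformedBracket, map_smul, hleib, map_add, smul_add, smul_sub]
    abel
end
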